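/- Fix y ∈ ℕ and μ > 0. The function θ ↦ ln f_NB(y, μ, θ) is differentiable at every θ > 0, with derivative equal to Ψ(y+θ) − Ψ(θ) + ln θ + 1 − ln(μ+θ) − (y+θ)/(μ+θ), where Ψ(t) denotes the derivative at t of the function s ↦ ln Γ(s) (the digamma function) and Γ is the real Gamma function. -/

import Mathlib

/-- Dirac delta at zero on the naturals. -/
noncomputable def delta0 (x : ℕ) : ℝ := if x = 0 then 1 else 0

/-- Negative binomial probability mass function with mean `μ` and dispersion `θ`. -/
noncomputable def fNB (x : ℕ) (μ θ : ℝ) : ℝ :=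
  Real.Gamma (x + θ) / (Real.Gamma (x + 1) * Real.Gamma θ) *
    (θ / (θ + μ)) ^ θ * (μ / (θ + μ)) ^ x

/-- Zero-inflated negative binomial probability mass function. -/
noncomputable def fZINB (x : ℕ) (μ θ π : ℝ) : ℝ :=
  π * delta0 x + (1 - π) * fNB x μ θ

/-- The logistic function. -/
noncomputable def logistic (t : ℝ) : ℝ := Real.exp t / (1 + Real.exp t)

/-- The digamma function: the derivative of `log ∘ Γ`. -/
noncomputable def digamma (t : ℝ) : ℝ := deriv (fun s : ℝ => Real.log (Real.Gamma s)) t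

theorem deriv_log_fNB_theta
    (y : ℕ) (μ : ℝ) (hμ : 0 < μ) (θ : ℝ) (hθ : 0 < θ) :
    HasDerivAt (fun t : ℝ => Real.log (fNB y μ t))
      (digamma ((y : ℝ) + θ) - digamma θ + Real.log θ + 1 - Real.log (μ + θ)
        - ((y : ℝ) + θ) / (μ + θ)) θ := by
  have hdig : ∀ t : ℝ, 0 < t →
      HasDerivAt (fun s : ℝ => Real.log (Real.Gamma s)) (digamma t) t := by
    intro t ht
    have hd : DifferentiableAt ℝ Real.Gamma t :=
      Real.differentiableAt_Gamma (fun m => by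
        have : (0:ℝ) ≤ m := Nat.cast_nonneg m
        intro h; rw [h] at ht; linarith)
    have hG : Real.Gamma t ≠ 0 := (Real.Gamma_pos_of_pos ht).ne'
    have : DifferentiableAt ℝ (fun s : ℝ => Real.log (Real.Gamma s)) t := hd.log hG
    simpa [digamma] using this.hasDerivAt
  set g : ℝ → ℝ := fun t =>
    Real.log (Real.Gamma ((y:ℝ) + t)) - Real.log (Real.Gamma ((y:ℝ) + 1))
      - Real.log (Real.Gamma t) + t * (Real.log t - Real.log (t + μ))
      + (y:ℝ) * (Real.log μ - Real.log (t + μ)) with hg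
  have h1 : HasDerivAt (fun t : ℝ => Real.log (Real.Gamma ((y:ℝ) + t)))
      (digamma ((y:ℝ) + θ)) θ := by
    have := (hdig ((y:ℝ) + θ) (by positivity)).comp θ ((hasDerivAt_id θ).const_add (y:ℝ))
    simpa [Function.comp_def] using this
  have hθμ : (0:ℝ) < θ + μ := by linarith
  have hlogt : HasDerivAt (fun t : ℝ => Real.log t) (1/θ) θ := by
    simpa using Real.hasDerivAt_log hθ.ne'
  have hlogtμ : HasDerivAt (fun t : ℝ => Real.log (t + μ)) (1/(θ + μ)) θ := by
    have := (Real.hasDerivAt_log hθμ.ne').comp θ ((hasDerivAt_id θ).add_const μ)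
    simpa [Function.comp_def] using this
  have h3 : HasDerivAt (fun t : ℝ => t * (Real.log t - Real.log (t + μ)))
      ((Real.log θ - Real.log (θ + μ)) + θ * (1/θ - 1/(θ + μ))) θ := by
    have := (hasDerivAt_id θ).mul (hlogt.sub hlogtμ)
    simpa [mul_comm, add_comm, Pi.mul_def, Pi.sub_def] using this
  have h4 : HasDerivAt (fun t : ℝ => (y:ℝ) * (Real.log μ - Real.log (t + μ)))
      ((y:ℝ) * (0 - 1/(θ + μ))) θ :=
    ((hasDerivAt_const θ (Real.log μ)).sub hlogtμ).const_mul _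
  have hgderiv : HasDerivAt g
      (digamma ((y:ℝ) + θ) - digamma θ + Real.log θ + 1 - Real.log (μ + θ)
        - ((y : ℝ) + θ) / (μ + θ)) θ := by
    have := ((((h1.sub (hasDerivAt_const θ (Real.log (Real.Gamma ((y:ℝ)+1))))).sub (hdig θ hθ)).add h3).add h4)
    refine this.congr_deriv ?_
    rw [add_comm μ θ]
    field_simp
    ring
  refine hgderiv.congr_of_eventuallyEq ?_
  filter_upwards [isOpen_Ioi.mem_nhds (Set.mem_Ioi.mpr hθ)] with t ht
  have ht : (0:ℝ) < t := ht
  have htμ : (0:ℝ) < t + μ := by linarith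
  have hA : Real.Gamma ((y:ℝ) + t) / (Real.Gamma ((y:ℝ) + 1) * Real.Gamma t) ≠ 0 := by
    have := Real.Gamma_pos_of_pos (show (0:ℝ) < (y:ℝ) + t by positivity)
    have := Real.Gamma_pos_of_pos (show (0:ℝ) < (y:ℝ) + 1 by positivity)
    have := Real.Gamma_pos_of_pos ht
    positivity
  have hBpos : (0:ℝ) < (t / (t + μ)) ^ t := Real.rpow_pos_of_pos (by positivity) t
  have hC : ((μ / (t + μ)) ^ y : ℝ) ≠ 0 := by positivity
  rw [hg]
  simp only [fNB]
  rw [Real.log_mul (mul_ne_zero hA hBpos.ne') hC, Real.log_mul hA hBpos.ne',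
    Real.log_div (by positivity) (by positivity),
    Real.log_mul (by positivity) (by positivity),
    Real.log_rpow (by positivity), Real.log_pow,
    Real.log_div (by positivity) htμ.ne', Real.log_div hμ.ne' htμ.ne']
  ring
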